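/- As λ → 0⁺, the unique solution p_λ of the dual problem D_λ(y) converges strongly in L²(T) to p₀, the minimal L²-norm solution of the limit dual problem D₀(y); consequently the certificates η_λ = Φ*p_λ and their first and second derivatives converge uniformly to η₀ = Φ*p₀ and its derivatives. -/

import Mathlib

open MeasureTheory

attribute [local instance] ZeroLEOneClass.factZeroLtOne

noncomputable section

/-- The torus `T = ℝ/ℤ`. -/
abbrev 𝕋 := AddCircle (1 : ℝ)

/-- Integral `∫ f dm` of a function against a (finite) signed Radon measure on the torus. -/
def sInt (m : SignedMeasure 𝕋) (f : 𝕋 → ℝ) : ℝ :=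
  ∫ x, f x ∂m.toJordanDecomposition.posPart - ∫ x, f x ∂m.toJordanDecomposition.negPart

/-- The total variation norm `‖m‖_TV = sup { ∫ ψ dm : ψ ∈ C(𝕋), ‖ψ‖_∞ ≤ 1 }`. -/
def tv (m : SignedMeasure 𝕋) : ℝ :=
  sSup { r | ∃ ψ : C(𝕋, ℝ), ‖ψ‖ ≤ 1 ∧ r = sInt m ψ }

/-- The lift of a function on the torus to a `1`-periodic function on `ℝ`. -/
def lift (f : 𝕋 → ℝ) : ℝ → ℝ := fun s => f (s : 𝕋)

/-- The convolution operator `Φ : M(𝕋) → L²(𝕋)`, `(Φm)(t) = ∫ φ(x − t) dm(x)`. -/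
def Phi (φ : 𝕋 → ℝ) (m : SignedMeasure 𝕋) : 𝕋 → ℝ := fun t => sInt m (fun x => φ (x - t))

/-- The adjoint operator `Φ* : L²(𝕋) → C(𝕋)`, `(Φ*p)(t) = ∫ φ(t − x) p(x) dx`. -/
def PhiStar (φ : 𝕋 → ℝ) (p : 𝕋 → ℝ) : 𝕋 → ℝ := fun t => ∫ x, φ (t - x) * p x

/-- The `L²(𝕋)` norm of a function. -/
def L2norm (p : 𝕋 → ℝ) : ℝ := Real.sqrt (∫ t, (p t) ^ 2)

/-- The `L²(𝕋)` inner product. -/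
def dotL2 (y p : 𝕋 → ℝ) : ℝ := ∫ t, y t * p t

/-- `p` is admissible for the dual problems: `p ∈ L²` and `‖Φ*p‖_∞ ≤ 1`. -/
def DualAdm (φ : 𝕋 → ℝ) (p : 𝕋 → ℝ) : Prop :=
  MemLp p 2 volume ∧ ∀ t : 𝕋, |PhiStar φ p t| ≤ 1


/-- The dual objective of `D_λ(y)`: `⟨y,p⟩ − (λ/2)‖p‖²`. -/
def dualObj (lam : ℝ) (y : 𝕋 → ℝ) (p : 𝕋 → ℝ) : ℝ :=
  dotL2 y p - (lam / 2) * ∫ t, (p t) ^ 2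

/-- `p` solves the dual problem `D_λ(y)`. -/
def SolvesDual (φ : 𝕋 → ℝ) (lam : ℝ) (y : 𝕋 → ℝ) (p : 𝕋 → ℝ) : Prop :=
  DualAdm φ p ∧ ∀ q, DualAdm φ q → dualObj lam y q ≤ dualObj lam y p

/-- `p₀` is the minimal `L²`-norm solution of the limit dual problem `D₀(y)`. -/
def MinNormSol (φ : 𝕋 → ℝ) (y : 𝕋 → ℝ) (p₀ : 𝕋 → ℝ) : Prop :=
  DualAdm φ p₀ ∧ (∀ q, DualAdm φ q → dotL2 y q ≤ dotL2 y p₀) ∧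
    ∀ q, DualAdm φ q → dotL2 y q = dotL2 y p₀ → L2norm p₀ ≤ L2norm q

open MeasureTheory

noncomputable section Helpers

local notation "E2" => Lp (α := 𝕋) ℝ 2 volume

lemma continuous_of_lift {f : 𝕋 → ℝ} (h : Continuous (lift f)) : Continuous f :=
  ((QuotientAddGroup.isQuotientMap_mk _).continuous_iff).mpr h

lemma exists_bound (f : 𝕋 → ℝ) (hf : Continuous f) : ∃ C, 0 ≤ C ∧ ∀ t : 𝕋, |f t| ≤ C := by
  obtain ⟨t0, -, ht0⟩ := isCompact_univ.exists_isMaxOn Set.univ_nonempty hf.abs.continuousOn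
  exact ⟨|f t0|, abs_nonneg _, fun t => ht0 (Set.mem_univ t)⟩

lemma memL2_of_continuous {f : 𝕋 → ℝ} (hf : Continuous f) : MemLp f 2 volume := by
  obtain ⟨C, -, hC⟩ := exists_bound f hf
  exact MemLp.of_bound hf.aestronglyMeasurable C (Filter.Eventually.of_forall
    (by simpa [Real.norm_eq_abs] using hC))

lemma integrable_mul_L2 {f g : 𝕋 → ℝ} (hf : MemLp f 2 volume) (hg : MemLp g 2 volume) :
    Integrable (fun t => f t * g t) volume := by
  have h := L2.integrable_inner (𝕜 := ℝ) (hf.toLp f) (hg.toLp g)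
  refine h.congr ?_
  filter_upwards [hf.coeFn_toLp, hg.coeFn_toLp] with t h1 h2
  simp [h1, h2, RCLike.inner_apply, mul_comm]

lemma integral_mul_eq_inner {f g : 𝕋 → ℝ} (hf : MemLp f 2 volume) (hg : MemLp g 2 volume) :
    (∫ t, f t * g t) = (inner ℝ (hf.toLp f) (hg.toLp g) : ℝ) := by
  rw [L2.inner_def]
  refine integral_congr_ae ?_
  filter_upwards [hf.coeFn_toLp, hg.coeFn_toLp] with t h1 h2
  simp [h1, h2, RCLike.inner_apply, mul_comm]

lemma integral_sq_eq_norm {f : 𝕋 → ℝ} (hf : MemLp f 2 volume) :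
    (∫ t, (f t) ^ 2) = ‖hf.toLp f‖ ^ 2 := by
  rw [← real_inner_self_eq_norm_sq, ← integral_mul_eq_inner hf hf]
  simp [sq]

end Helpers
noncomputable section Stage2
open MeasureTheory

lemma integrable_kernel_mul {g : 𝕋 → ℝ} (hg : Continuous g) {f : 𝕋 → ℝ}
    (hf : MemLp f 2 volume) (t : 𝕋) :
    Integrable (fun x => g (t - x) * f x) volume := by
  have hfi : Integrable f volume := hf.integrable (by norm_num)
  obtain ⟨C, -, hC⟩ := exists_bound g hg
  exact hfi.bdd_mul ((hg.comp (continuous_const.sub continuous_id)).aestronglyMeasurable)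
    (Filter.Eventually.of_forall fun x => by simpa [Real.norm_eq_abs] using hC _)

lemma integral_mul_combo {w f d : 𝕋 → ℝ} (c : ℝ)
    (h1 : Integrable (fun x => w x * f x) volume)
    (h2 : Integrable (fun x => w x * d x) volume) :
    ∫ x, w x * (f x + c * d x) = (∫ x, w x * f x) + c * ∫ x, w x * d x := by
  have e : (fun x => w x * (f x + c * d x)) = fun x => w x * f x + c * (w x * d x) :=
    funext fun x => by ring
  rw [e, integral_add h1 (h2.const_mul c), integral_const_mul]

lemma integral_mul_sub' {w q f : 𝕋 → ℝ}
    (h1 : Integrable (fun x => w x * q x) volume)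
    (h2 : Integrable (fun x => w x * f x) volume) :
    ∫ x, w x * (q x - f x) = (∫ x, w x * q x) - ∫ x, w x * f x := by
  have e : (fun x => w x * (q x - f x)) = fun x => w x * q x - w x * f x :=
    funext fun x => by ring
  rw [e, integral_sub h1 h2]

lemma integral_sq_combo {f d : 𝕋 → ℝ} (hf : MemLp f 2 volume) (hd : MemLp d 2 volume) (c : ℝ) :
    ∫ t, (f t + c * d t) ^ 2 =
      (∫ t, f t * f t) + ((2 * c) * ∫ t, f t * d t) + c ^ 2 * ∫ t, d t * d t := by
  have iff' := integrable_mul_L2 hf hf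
  have ifd := integrable_mul_L2 hf hd
  have idd := integrable_mul_L2 hd hd
  have e : (fun t => (f t + c * d t) ^ 2) =
      fun t => f t * f t + ((2 * c) * (f t * d t) + c ^ 2 * (d t * d t)) :=
    funext fun t => by ring
  have hsum : Integrable (fun t => 2 * c * (f t * d t) + c ^ 2 * (d t * d t)) volume := by
    exact (ifd.const_mul (2*c)).add (idd.const_mul (c^2))
  rw [e, integral_add iff' hsum,
    integral_add (ifd.const_mul (2*c)) (idd.const_mul (c^2)), integral_const_mul, integral_const_mul]
  ring

/-- The variational inequality for the solution of `D_λ(y)`. -/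
lemma var_ineq {φ : 𝕋 → ℝ} (hφc : Continuous φ) {y pl : 𝕋 → ℝ} (hy : MemLp y 2 volume)
    {lam : ℝ} (hlam : 0 < lam) (hsol : SolvesDual φ lam y pl)
    {q : 𝕋 → ℝ} (hq : DualAdm φ q) :
    dotL2 y q - dotL2 y pl ≤ lam * ((∫ t, pl t * q t) - ∫ t, pl t * pl t) := by
  obtain ⟨⟨hpl2, hplc⟩, hopt⟩ := hsol
  obtain ⟨hq2, hqc⟩ := hq
  set d : 𝕋 → ℝ := fun x => q x - pl x with hd_def
  have hd2 : MemLp d 2 volume := hq2.sub hpl2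
  have intyd : Integrable (fun x => y x * d x) volume := integrable_mul_L2 hy hd2
  have intypl : Integrable (fun x => y x * pl x) volume := integrable_mul_L2 hy hpl2
  have intyq : Integrable (fun x => y x * q x) volume := integrable_mul_L2 hy hq2
  have intpld : Integrable (fun x => pl x * d x) volume := integrable_mul_L2 hpl2 hd2
  have intplq : Integrable (fun x => pl x * q x) volume := integrable_mul_L2 hpl2 hq2
  have intplpl : Integrable (fun x => pl x * pl x) volume := integrable_mul_L2 hpl2 hpl2
  set A : ℝ := ∫ x, y x * d x with hA
  set B : ℝ := ∫ x, pl x * d x with hB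
  set C : ℝ := ∫ x, d x * d x with hC
  have hCnn : 0 ≤ C := integral_nonneg fun x => mul_self_nonneg _
  -- key: for all c ∈ (0,1], A - lam * B ≤ c * ((lam/2) * C)
  have key : ∀ c : ℝ, 0 < c → c ≤ 1 → A - lam * B ≤ c * ((lam / 2) * C) := by
    intro c hc0 hc1
    set qc : 𝕋 → ℝ := fun x => pl x + c * d x with hqc_def
    have hqc2 : MemLp qc 2 volume := hpl2.add (hd2.const_mul c)
    have hconstr : ∀ t, |PhiStar φ qc t| ≤ 1 := by
      intro t
      have e1 : PhiStar φ qc t = PhiStar φ pl t + c * ((PhiStar φ q t) - PhiStar φ pl t) := by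
        have h1 := integrable_kernel_mul hφc hpl2 t
        have h2 := integrable_kernel_mul hφc hd2 t
        have h3 := integrable_kernel_mul hφc hq2 t
        simp only [PhiStar]
        rw [integral_mul_combo c h1 h2]
        congr 1
        rw [← integral_mul_sub' h3 h1]
      rw [e1]
      have h1 := hplc t
      have h2 := hqc t
      have habs : |PhiStar φ pl t + c * (PhiStar φ q t - PhiStar φ pl t)| ≤
          (1 - c) * |PhiStar φ pl t| + c * |PhiStar φ q t| := by
        have : PhiStar φ pl t + c * (PhiStar φ q t - PhiStar φ pl t) =
            (1 - c) * PhiStar φ pl t + c * PhiStar φ q t := by ring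
        rw [this]
        refine (abs_add_le _ _).trans ?_
        rw [abs_mul, abs_mul, abs_of_nonneg (by linarith), abs_of_nonneg hc0.le]
      nlinarith
    have hle := hopt qc ⟨hqc2, hconstr⟩
    have hdot : dotL2 y qc = dotL2 y pl + c * A := integral_mul_combo c intypl intyd
    have hsq : ∫ t, (qc t) ^ 2 = (∫ t, pl t * pl t) + (2 * c) * B + c ^ 2 * C :=
      integral_sq_combo hpl2 hd2 c
    have hsqpl : ∫ t, (pl t) ^ 2 = ∫ t, pl t * pl t := by
      refine integral_congr_ae (Filter.Eventually.of_forall fun t => ?_)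
      simp [sq]
    rw [dualObj, dualObj, hdot, hsq, hsqpl] at hle
    have : c * (A - lam * B) ≤ c * (c * ((lam / 2) * C)) := by nlinarith
    exact le_of_mul_le_mul_left (by linarith [this]) hc0
  -- conclude A - lam * B ≤ 0
  have hAB : A - lam * B ≤ 0 := by
    refine le_of_forall_pos_le_add fun ε hε => ?_
    set K : ℝ := (lam / 2) * C with hK
    have hKnn : 0 ≤ K := by positivity
    have hc0 : (0:ℝ) < min 1 (ε / (K + 1)) := lt_min one_pos (by positivity)
    have := key _ hc0 (min_le_left _ _)
    have h2 : min 1 (ε / (K + 1)) * K ≤ ε := by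
      have h3 : min 1 (ε / (K + 1)) ≤ ε / (K + 1) := min_le_right _ _
      calc min 1 (ε / (K + 1)) * K ≤ (ε / (K + 1)) * K := by
            exact mul_le_mul_of_nonneg_right h3 hKnn
        _ ≤ ε := by
            rw [div_mul_eq_mul_div, div_le_iff₀ (by positivity)]
            nlinarith
    linarith
  have hAeq : A = dotL2 y q - dotL2 y pl := by
    rw [hA, hd_def]
    exact integral_mul_sub' intyq intypl
  have hBeq : B = (∫ t, pl t * q t) - ∫ t, pl t * pl t := by
    rw [hB, hd_def]
    exact integral_mul_sub' intplq intplpl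
  rw [← hAeq, ← hBeq]; linarith

end Stage2
noncomputable section Stage3
open MeasureTheory Filter

lemma phiStar_bound {φ : 𝕋 → ℝ} (hφc : Continuous φ) :
    ∃ K : ℝ, 0 ≤ K ∧ ∀ (f : 𝕋 → ℝ) (hf : MemLp f 2 volume) (t : 𝕋),
      |PhiStar φ f t| ≤ K * Real.sqrt (∫ x, (f x) ^ 2) := by
  obtain ⟨C, hC0, hC⟩ := exists_bound φ hφc
  set V : ℝ := (volume (Set.univ : Set 𝕋)).toReal with hV
  have hV0 : 0 ≤ V := ENNReal.toReal_nonneg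
  refine ⟨Real.sqrt (C ^ 2 * V), Real.sqrt_nonneg _, fun f hf t => ?_⟩
  have hker : Continuous fun x : 𝕋 => φ (t - x) := hφc.comp (continuous_const.sub continuous_id)
  have hkerL2 : MemLp (fun x : 𝕋 => φ (t - x)) 2 volume := memL2_of_continuous hker
  have h1 : PhiStar φ f t = (inner ℝ (hkerL2.toLp _) (hf.toLp f) : ℝ) :=
    integral_mul_eq_inner hkerL2 hf
  have h2 : |(inner ℝ (hkerL2.toLp _) (hf.toLp f) : ℝ)| ≤ ‖hkerL2.toLp _‖ * ‖hf.toLp f‖ :=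
    abs_real_inner_le_norm _ _
  have h3 : ‖hkerL2.toLp _‖ ≤ Real.sqrt (C ^ 2 * V) := by
    have hsq : ‖hkerL2.toLp _‖ ^ 2 ≤ C ^ 2 * V := by
      rw [← integral_sq_eq_norm hkerL2]
      have hint : Integrable (fun x : 𝕋 => φ (t - x) ^ 2) volume := by
        have := integrable_mul_L2 hkerL2 hkerL2
        exact this.congr (Filter.Eventually.of_forall fun x => by simp [sq])
      calc ∫ x : 𝕋, φ (t - x) ^ 2 ≤ ∫ _ : 𝕋, C ^ 2 := by
            refine integral_mono hint (integrable_const _) fun x => ?_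
            have := hC (t - x)
            nlinarith [abs_nonneg (φ (t - x)), neg_abs_le (φ (t - x)), le_abs_self (φ (t - x))]
        _ = C ^ 2 * V := by rw [integral_const, smul_eq_mul, measureReal_def, hV]; ring
    calc ‖hkerL2.toLp _‖ = Real.sqrt (‖hkerL2.toLp _‖ ^ 2) := (Real.sqrt_sq (norm_nonneg _)).symm
      _ ≤ Real.sqrt (C ^ 2 * V) := Real.sqrt_le_sqrt hsq
  have h4 : ‖hf.toLp f‖ = Real.sqrt (∫ x, (f x) ^ 2) := by
    rw [integral_sq_eq_norm hf, Real.sqrt_sq (norm_nonneg _)]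
  calc |PhiStar φ f t| ≤ ‖hkerL2.toLp _‖ * ‖hf.toLp f‖ := by rw [h1]; exact h2
    _ ≤ Real.sqrt (C ^ 2 * V) * ‖hf.toLp f‖ :=
        mul_le_mul_of_nonneg_right h3 (norm_nonneg _)
    _ = Real.sqrt (C ^ 2 * V) * Real.sqrt (∫ x, (f x) ^ 2) := by rw [h4]

set_option maxHeartbeats 2000000 in
lemma l2_convergence {φ : 𝕋 → ℝ} (hφc : Continuous φ)
    {y : 𝕋 → ℝ} (hy : MemLp y 2 volume)
    {p : ℝ → 𝕋 → ℝ} (hp : ∀ lam : ℝ, 0 < lam → SolvesDual φ lam y (p lam))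
    {p₀ : 𝕋 → ℝ} (hp₀ : MinNormSol φ y p₀) :
    Filter.Tendsto (fun lam => ∫ t, (p lam t - p₀ t) ^ 2)
      (nhdsWithin 0 (Set.Ioi 0)) (nhds 0) := by
  classical
  set l0 : Filter ℝ := nhdsWithin 0 (Set.Ioi 0) with hl0
  haveI hne : l0.NeBot := nhdsGT_neBot 0
  set u0 : Lp ℝ 2 (volume : Measure 𝕋) := hp₀.1.1.toLp p₀ with hu0
  set u : ℝ → Lp ℝ 2 (volume : Measure 𝕋) :=
    fun l => if h : 0 < l then ((hp l h).1.1).toLp (p l) else u0 with hu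
  have hul : ∀ l (hl : 0 < l), u l = ((hp l hl).1.1).toLp (p l) := fun l hl => dif_pos hl
  obtain ⟨N0, hN0⟩ : ∃ N0 : ℝ, N0 = ‖u0‖ ^ 2 := ⟨_, rfl⟩
  have hN0nn : 0 ≤ N0 := by rw [hN0]; positivity
  obtain ⟨a₀, ha₀⟩ : ∃ a₀ : ℝ, a₀ = dotL2 y p₀ := ⟨_, rfl⟩
  obtain ⟨A, hA⟩ : ∃ A : ℝ → ℝ, A = fun l => dotL2 y (p l) := ⟨_, rfl⟩
  have hA' : ∀ l, A l = dotL2 y (p l) := fun l => by rw [hA]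
  set Y : Lp ℝ 2 (volume : Measure 𝕋) := hy.toLp y with hY
  -- dictionary
  have hsqp₀ : ∫ t, (p₀ t) ^ 2 = N0 := by rw [hN0]; exact integral_sq_eq_norm hp₀.1.1
  have hsqpl : ∀ l (hl : 0 < l), ∫ t, (p l t) ^ 2 = ‖u l‖ ^ 2 := by
    intro l hl; rw [hul l hl]; exact integral_sq_eq_norm _
  have hAeq : ∀ l (hl : 0 < l), A l = (inner ℝ Y (u l) : ℝ) := by
    intro l hl; rw [hA' l, hul l hl]; exact integral_mul_eq_inner hy _
  have hinner_lm : ∀ l (hl : 0 < l) m (hm : 0 < m),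
      (∫ t, p l t * p m t) = (inner ℝ (u l) (u m) : ℝ) := by
    intro l hl m hm; rw [hul l hl, hul m hm]; exact integral_mul_eq_inner _ _
  have hinner_l0 : ∀ l (hl : 0 < l), (∫ t, p l t * p₀ t) = (inner ℝ (u l) u0 : ℝ) := by
    intro l hl; rw [hul l hl, hu0]; exact integral_mul_eq_inner _ _
  have hinner_self : ∀ l (hl : 0 < l), (∫ t, p l t * p l t) = ‖u l‖ ^ 2 := by
    intro l hl
    rw [hinner_lm l hl l hl, real_inner_self_eq_norm_sq]
  -- fact 1
  have fact1 : ∀ l (hl : 0 < l),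
      ‖u l‖ ^ 2 ≤ N0 ∧ 0 ≤ a₀ - A l ∧ a₀ - A l ≤ (l / 2) * (N0 - ‖u l‖ ^ 2) := by
    intro l hl
    have h1 := (hp l hl).2 p₀ hp₀.1
    rw [dualObj, dualObj, hsqp₀, hsqpl l hl, ← ha₀, ← hA' l] at h1
    have h2 : A l ≤ a₀ := by
      rw [ha₀, hA' l]; exact hp₀.2.1 (p l) (hp l hl).1
    have hle : ‖u l‖ ^ 2 ≤ N0 := by nlinarith
    exact ⟨hle, by linarith, by nlinarith⟩
  -- fact 2
  have fact2 : ∀ l (hl : 0 < l), ‖u l‖ ^ 2 ≤ (inner ℝ (u l) u0 : ℝ) := by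
    intro l hl
    have h1 := var_ineq hφc hy hl (hp l hl) hp₀.1
    rw [hinner_l0 l hl, hinner_self l hl, ← ha₀, ← hA' l] at h1
    have h2 := (fact1 l hl).2.1
    nlinarith
  -- fact 3
  have fact3 : ∀ l (hl : 0 < l) m (hm : 0 < m),
      ‖u l - u m‖ ^ 2 ≤ (‖u l‖ ^ 2 - ‖u m‖ ^ 2) + (l / m) * (N0 - ‖u l‖ ^ 2) := by
    intro l hl m hm
    have h1 := var_ineq hφc hy hm (hp m hm) (hp l hl).1
    rw [hinner_lm m hm l hl, hinner_self m hm, ← hA' l, ← hA' m] at h1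
    have h2 : A m ≤ a₀ := by
      rw [ha₀, hA' m]; exact hp₀.2.1 (p m) (hp m hm).1
    have h3 := (fact1 l hl).2.2
    have key : m * (‖u m‖ ^ 2 - (inner ℝ (u m) (u l) : ℝ)) ≤ (l / 2) * (N0 - ‖u l‖ ^ 2) := by
      nlinarith
    have key2 : ‖u m‖ ^ 2 - (inner ℝ (u m) (u l) : ℝ) ≤ ((l / 2) * (N0 - ‖u l‖ ^ 2)) / m := by
      rw [le_div_iff₀ hm]
      calc (‖u m‖ ^ 2 - (inner ℝ (u m) (u l) : ℝ)) * m
          = m * (‖u m‖ ^ 2 - (inner ℝ (u m) (u l) : ℝ)) := by ring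
        _ ≤ (l / 2) * (N0 - ‖u l‖ ^ 2) := key
    have hexp : ‖u l - u m‖ ^ 2 = ‖u l‖ ^ 2 - 2 * (inner ℝ (u l) (u m) : ℝ) + ‖u m‖ ^ 2 :=
      norm_sub_sq_real (u l) (u m)
    have hcomm : (inner ℝ (u l) (u m) : ℝ) = (inner ℝ (u m) (u l) : ℝ) := real_inner_comm _ _
    have hdiv : (l / m) * (N0 - ‖u l‖ ^ 2) = 2 * (((l / 2) * (N0 - ‖u l‖ ^ 2)) / m) := by
      field_simp
    rw [hexp, hcomm, hdiv]
    linarith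
  -- Cauchy
  obtain ⟨S, hS⟩ : ∃ S : Set ℝ, S = (fun l => ‖u l‖ ^ 2) '' Set.Ioi 0 := ⟨_, rfl⟩
  have hSmem : ∀ l (_ : 0 < l), ‖u l‖ ^ 2 ∈ S := fun l hl => by
    rw [hS]; exact ⟨l, hl, rfl⟩
  have hSne : S.Nonempty := ⟨‖u 1‖ ^ 2, hSmem 1 one_pos⟩
  have hSbdd : BddAbove S := by
    refine ⟨N0, ?_⟩
    rw [hS]
    rintro r ⟨l, hl, rfl⟩
    exact (fact1 l hl).1
  obtain ⟨s, hs⟩ : ∃ s : ℝ, s = sSup S := ⟨_, rfl⟩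
  have hcauchy : Cauchy (Filter.map u l0) := by
    rw [Metric.cauchy_iff]
    refine ⟨Filter.map_neBot, fun ε hε => ?_⟩
    obtain ⟨ε1, hε1⟩ : ∃ ε1 : ℝ, ε1 = ε ^ 2 / 16 := ⟨_, rfl⟩
    have hε1pos : 0 < ε1 := by rw [hε1]; positivity
    obtain ⟨r, hrS, hrgt⟩ : ∃ r ∈ S, s - ε1 < r :=
      exists_lt_of_lt_csSup hSne (by rw [hs] at *; linarith [le_csSup hSbdd (hSmem 1 one_pos)])
    rw [hS] at hrS
    obtain ⟨m, hm, rfl⟩ := hrS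
    have hm' : (0:ℝ) < m := hm
    have hrgt' : s - ε1 < ‖u m‖ ^ 2 := hrgt
    obtain ⟨δ, hδ⟩ : ∃ δ : ℝ, δ = min m (ε1 * m / (N0 + 1)) := ⟨_, rfl⟩
    have hδpos : 0 < δ := by rw [hδ]; exact lt_min hm' (by positivity)
    have hkey : ∀ l ∈ Set.Ioo (0:ℝ) δ, ‖u l - u m‖ < ε / 2 := by
      intro l hlmem
      have hl : 0 < l := hlmem.1
      have hlδ : l < δ := hlmem.2
      have h3 := fact3 l hl m hm'
      have hls : ‖u l‖ ^ 2 ≤ s := by rw [hs]; exact le_csSup hSbdd (hSmem l hl)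
      have hterm1 : ‖u l‖ ^ 2 - ‖u m‖ ^ 2 ≤ ε1 := by linarith
      have hterm2 : (l / m) * (N0 - ‖u l‖ ^ 2) ≤ ε1 := by
        have h5 : l ≤ ε1 * m / (N0 + 1) := by
          refine le_of_lt (lt_of_lt_of_le hlδ ?_)
          rw [hδ]; exact min_le_right _ _
        have h6 : 0 ≤ N0 - ‖u l‖ ^ 2 := by linarith [(fact1 l hl).1]
        have h7 : N0 - ‖u l‖ ^ 2 ≤ N0 + 1 := by nlinarith [sq_nonneg (‖u l‖)]
        have h8 : l / m ≤ ε1 / (N0 + 1) := by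
          rw [div_le_div_iff₀ hm' (by linarith)]
          calc l * (N0 + 1) ≤ (ε1 * m / (N0 + 1)) * (N0 + 1) := by
                exact mul_le_mul_of_nonneg_right h5 (by linarith)
            _ = ε1 * m := by field_simp
        calc (l / m) * (N0 - ‖u l‖ ^ 2) ≤ (ε1 / (N0 + 1)) * (N0 + 1) := by
              refine mul_le_mul h8 h7 h6 ?_
              positivity
          _ = ε1 := by field_simp
      have hsq : ‖u l - u m‖ ^ 2 ≤ ε ^ 2 / 8 := by
        have : ‖u l - u m‖ ^ 2 ≤ 2 * ε1 := by linarith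
        rw [hε1] at this; linarith
      have : ‖u l - u m‖ = Real.sqrt (‖u l - u m‖ ^ 2) := (Real.sqrt_sq (norm_nonneg _)).symm
      rw [this]
      rw [show ε / 2 = Real.sqrt ((ε/2)^2) from (Real.sqrt_sq (by linarith)).symm]
      refine Real.sqrt_lt_sqrt (by positivity) ?_
      nlinarith
    refine ⟨u '' Set.Ioo 0 δ,
      Filter.image_mem_map (Ioo_mem_nhdsGT_of_mem ⟨le_refl 0, hδpos⟩), ?_⟩
    rintro _ ⟨l1, hl1, rfl⟩ _ ⟨l2, hl2, rfl⟩
    calc dist (u l1) (u l2) ≤ dist (u l1) (u m) + dist (u m) (u l2) := dist_triangle _ _ _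
      _ = ‖u l1 - u m‖ + ‖u l2 - u m‖ := by
          rw [dist_eq_norm, dist_eq_norm, norm_sub_rev (u m)]
      _ < ε / 2 + ε / 2 := add_lt_add (hkey l1 hl1) (hkey l2 hl2)
      _ = ε := by ring
  obtain ⟨x, hx⟩ := CompleteSpace.complete hcauchy
  have hconv : Filter.Tendsto u l0 (nhds x) := hx
  -- A tends to a₀
  have hA0 : Filter.Tendsto (fun l => a₀ - A l) l0 (nhds 0) := by
    have hg : Filter.Tendsto (fun l : ℝ => (l / 2) * N0) l0 (nhds 0) := by
      have h : Filter.Tendsto (fun l : ℝ => (l / 2) * N0) (nhds 0) (nhds ((0 / 2) * N0)) :=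
        Continuous.tendsto ((continuous_id.div_const 2).mul continuous_const) 0
      simpa using h.mono_left nhdsWithin_le_nhds
    refine squeeze_zero' ?_ ?_ hg
    · filter_upwards [self_mem_nhdsWithin] with l hl
      exact ((fact1 l hl).2.1)
    · filter_upwards [self_mem_nhdsWithin] with l hl
      have h1 := (fact1 l hl).2.2
      nlinarith [mul_nonneg hl.le (sq_nonneg (‖u l‖))]
  have hAconv : Filter.Tendsto A l0 (nhds a₀) := by
    have := Filter.Tendsto.sub (tendsto_const_nhds (x := a₀)) hA0
    simp only [sub_zero] at this
    refine this.congr fun l => by ring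
  -- inner Y x = a₀
  have hYx : (inner ℝ Y x : ℝ) = a₀ := by
    have h1 : Filter.Tendsto (fun l => (inner ℝ Y (u l) : ℝ)) l0 (nhds (inner ℝ Y x : ℝ)) :=
      Filter.Tendsto.inner tendsto_const_nhds hconv
    have h2 : Filter.Tendsto A l0 (nhds (inner ℝ Y x : ℝ)) := by
      refine h1.congr' ?_
      filter_upwards [self_mem_nhdsWithin] with l hl
      exact (hAeq l hl).symm
    exact tendsto_nhds_unique h2 hAconv
  -- admissibility of x
  have hadm : DualAdm φ (x : 𝕋 → ℝ) := by
    refine ⟨Lp.memLp x, fun t => ?_⟩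
    have hker : Continuous fun z : 𝕋 => φ (t - z) := hφc.comp (continuous_const.sub continuous_id)
    have hkerL2 : MemLp (fun z : 𝕋 => φ (t - z)) 2 volume := memL2_of_continuous hker
    set w : Lp ℝ 2 (volume : Measure 𝕋) := hkerL2.toLp _ with hw
    have hxw : PhiStar φ (x : 𝕋 → ℝ) t = (inner ℝ w (x : Lp ℝ 2 (volume : Measure 𝕋)) : ℝ) := by
      rw [PhiStar]
      rw [integral_mul_eq_inner hkerL2 (Lp.memLp x), Lp.toLp_coeFn _ _]
    have hlw : ∀ l (hl : 0 < l), PhiStar φ (p l) t = (inner ℝ w (u l) : ℝ) := by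
      intro l hl
      rw [PhiStar, integral_mul_eq_inner hkerL2 (hp l hl).1.1, hul l hl]
    have h1 : Filter.Tendsto (fun l => |(inner ℝ w (u l) : ℝ)|) l0 (nhds |(inner ℝ w x : ℝ)|) :=
      (Filter.Tendsto.inner tendsto_const_nhds hconv).abs
    have h2 : |(inner ℝ w x : ℝ)| ≤ 1 := by
      refine le_of_tendsto h1 ?_
      filter_upwards [self_mem_nhdsWithin] with l hl
      rw [← hlw l hl]
      exact (hp l hl).1.2 t
    rw [hxw]; exact h2
  -- dotL2 y x = a₀
  have hdotx : dotL2 y (x : 𝕋 → ℝ) = a₀ := by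
    rw [dotL2]
    rw [integral_mul_eq_inner hy (Lp.memLp x), Lp.toLp_coeFn _ _]
    exact hYx
  -- minimality
  have hL2p₀ : L2norm p₀ = ‖u0‖ := by
    rw [L2norm, hsqp₀, hN0, Real.sqrt_sq (norm_nonneg _)]
  have hL2x : L2norm (x : 𝕋 → ℝ) = ‖x‖ := by
    rw [L2norm, integral_sq_eq_norm (Lp.memLp x), Lp.toLp_coeFn _ _,
      Real.sqrt_sq (norm_nonneg _)]
  have hN0lex : N0 ≤ ‖x‖ ^ 2 := by
    have := hp₀.2.2 (x : 𝕋 → ℝ) hadm (by rw [hdotx, ha₀])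
    rw [hL2p₀, hL2x] at this
    rw [hN0]
    exact pow_le_pow_left₀ (norm_nonneg _) this 2
  have hxleN0 : ‖x‖ ^ 2 ≤ N0 := by
    refine le_of_tendsto ((hconv.norm).pow 2) ?_
    filter_upwards [self_mem_nhdsWithin] with l hl
    exact (fact1 l hl).1
  have hxinner : ‖x‖ ^ 2 ≤ (inner ℝ x u0 : ℝ) := by
    refine le_of_tendsto_of_tendsto ((hconv.norm).pow 2)
      (Filter.Tendsto.inner hconv tendsto_const_nhds) ?_
    filter_upwards [self_mem_nhdsWithin] with l hl
    exact fact2 l hl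
  have hxu0 : x = u0 := by
    have hxx : ‖x‖ ^ 2 = N0 := le_antisymm hxleN0 hN0lex
    have h1 : ‖x - u0‖ ^ 2 ≤ 0 := by
      rw [norm_sub_sq_real]
      nlinarith
    have h2 : ‖x - u0‖ = 0 := by nlinarith [norm_nonneg (x - u0), sq_nonneg (‖x - u0‖)]
    have := norm_eq_zero.mp h2
    exact sub_eq_zero.mp this
  -- conclusion
  have hfinal : Filter.Tendsto (fun l => ‖u l - u0‖ ^ 2) l0 (nhds 0) := by
    have h1 : Filter.Tendsto (fun l => ‖u l - u0‖ ^ 2) l0 (nhds (‖x - u0‖ ^ 2)) :=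
      ((hconv.sub tendsto_const_nhds).norm).pow 2
    rw [hxu0] at h1
    simpa using h1
  refine hfinal.congr' ?_
  filter_upwards [self_mem_nhdsWithin] with l hl
  have hm : MemLp (fun t => p l t - p₀ t) 2 volume := by
    exact ((hp l hl).1.1).sub hp₀.1.1
  have : ∫ t, (p l t - p₀ t) ^ 2 = ‖u l - u0‖ ^ 2 := by
    rw [← real_inner_self_eq_norm_sq, L2.inner_def]
    refine (integral_congr_ae ?_).symm
    have hc1 : (↑↑(u l) : 𝕋 → ℝ) =ᵐ[volume] p l := by
      rw [hul l hl]; exact MemLp.coeFn_toLp _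
    have hc0 : (↑↑u0 : 𝕋 → ℝ) =ᵐ[volume] p₀ := MemLp.coeFn_toLp _
    filter_upwards [Lp.coeFn_sub (u l) u0, hc1, hc0] with t h1 h2 h3
    rw [h1, Pi.sub_apply, h2, h3]
    simp [RCLike.inner_apply, conj_trivial, sq]
  exact this.symm

end Stage3
noncomputable section Stage4
open MeasureTheory Filter Function

lemma coeT_add (a b : ℝ) : ((a + b : ℝ) : 𝕋) = (a : 𝕋) + (b : 𝕋) := rfl

lemma coeT_sub (a b : ℝ) : ((a - b : ℝ) : 𝕋) = (a : 𝕋) - (b : 𝕋) := rfl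

lemma periodic_lift (f : 𝕋 → ℝ) : Function.Periodic (lift f) 1 := fun s => by
  show f ((s + 1 : ℝ) : 𝕋) = f (s : 𝕋)
  rw [AddCircle.coe_add_period]

lemma periodic_deriv' {f : ℝ → ℝ} (h : Function.Periodic f 1) :
    Function.Periodic (deriv f) 1 := by
  intro s
  rw [← deriv_comp_add_const, h.funext]

/-- Differentiating a convolution-type integral under the integral sign. -/
lemma hasDerivAt_conv {a b : 𝕋 → ℝ} (ha : Continuous a) (hb : Continuous b)
    (hder : ∀ s : ℝ, HasDerivAt (lift a) (lift b s) s)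
    {f : 𝕋 → ℝ} (hf : MemLp f 2 volume) (s : ℝ) :
    HasDerivAt (fun s' : ℝ => ∫ x : 𝕋, a ((s' : 𝕋) - x) * f x)
      (∫ x : 𝕋, b ((s : 𝕋) - x) * f x) s := by
  obtain ⟨Cb, hCb0, hCb⟩ := exists_bound b hb
  have hfi : Integrable f volume := hf.integrable (by norm_num)
  have hmeas : ∀ s' : ℝ, AEStronglyMeasurable (fun x : 𝕋 => a ((s' : 𝕋) - x) * f x) volume :=
    fun s' => ((ha.comp (continuous_const.sub continuous_id)).aestronglyMeasurable).mul
      hf.aestronglyMeasurable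
  have hmeas' : AEStronglyMeasurable (fun x : 𝕋 => b ((s : 𝕋) - x) * f x) volume :=
    ((hb.comp (continuous_const.sub continuous_id)).aestronglyMeasurable).mul
      hf.aestronglyMeasurable
  have key := hasDerivAt_integral_of_dominated_loc_of_deriv_le (μ := (volume : Measure 𝕋))
    (F := fun (s' : ℝ) (x : 𝕋) => a ((s' : 𝕋) - x) * f x)
    (F' := fun (s' : ℝ) (x : 𝕋) => b ((s' : 𝕋) - x) * f x)
    (x₀ := s) (bound := fun x => Cb * |f x|) (s := Metric.ball s 1) (Metric.ball_mem_nhds s one_pos)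
    (Filter.Eventually.of_forall hmeas)
    (integrable_kernel_mul ha hf ((s : ℝ) : 𝕋))
    hmeas'
    ?_ ?_ ?_
  · exact key.2
  · refine Filter.Eventually.of_forall fun x => fun s' _ => ?_
    rw [Real.norm_eq_abs, abs_mul]
    exact mul_le_mul (hCb _) le_rfl (abs_nonneg _) hCb0
  · exact (hfi.abs.const_mul Cb)
  · refine Filter.Eventually.of_forall fun x => fun s' _ => ?_
    induction x using QuotientAddGroup.induction_on with
    | H r =>
      have hcast : ∀ u : ℝ, ((u : 𝕋) - (r : 𝕋)) = ((u - r : ℝ) : 𝕋) := fun u =>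
        (coeT_sub u r).symm
      have h1 : HasDerivAt (fun u : ℝ => lift a (u - r)) (lift b (s' - r)) s' := by
        have h2 : HasDerivAt (fun u : ℝ => u - r) 1 s' := by
          simpa using (hasDerivAt_id s').sub_const r
        have h4 := (hder (s' - r)).comp s' h2; rw [mul_one] at h4; exact h4
      have h3 : HasDerivAt (fun u : ℝ => lift a (u - r) * f ((r : ℝ) : 𝕋))
          (lift b (s' - r) * f ((r : ℝ) : 𝕋)) s' := h1.mul_const _
      have he : (fun u : ℝ => a ((u : 𝕋) - ((r : ℝ) : 𝕋)) * f ((r : ℝ) : 𝕋)) =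
          fun u : ℝ => lift a (u - r) * f ((r : ℝ) : 𝕋) := by
        funext u
        rw [hcast u]
        rfl
      show HasDerivAt (fun u : ℝ => a ((u : 𝕋) - ((r : ℝ) : 𝕋)) * f ((r : ℝ) : 𝕋))
        (b ((s' : 𝕋) - ((r : ℝ) : 𝕋)) * f ((r : ℝ) : 𝕋)) s'
      rw [he, show b ((s' : 𝕋) - ((r : ℝ) : 𝕋)) = lift b (s' - r) by rw [hcast s']; rfl]
      exact h3

/-- Uniform convergence of smoothed quantities given `L²` convergence. -/
lemma unif_conv_of_sq {ψ : 𝕋 → ℝ} (hψ : Continuous ψ)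
    {p : ℝ → 𝕋 → ℝ} (hpmem : ∀ l : ℝ, 0 < l → MemLp (p l) 2 volume)
    {p₀ : 𝕋 → ℝ} (h0 : MemLp p₀ 2 volume)
    (hconv : Filter.Tendsto (fun lam => ∫ t, (p lam t - p₀ t) ^ 2)
      (nhdsWithin 0 (Set.Ioi 0)) (nhds 0)) :
    TendstoUniformly (fun lam (s : ℝ) => ∫ x : 𝕋, ψ ((s : 𝕋) - x) * p lam x)
      (fun s : ℝ => ∫ x : 𝕋, ψ ((s : 𝕋) - x) * p₀ x) (nhdsWithin 0 (Set.Ioi 0)) := by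
  obtain ⟨K, hK0, hK⟩ := phiStar_bound hψ
  rw [Metric.tendstoUniformly_iff]
  intro ε hε
  have hη : (0:ℝ) < (ε / (K + 1)) ^ 2 := by positivity
  filter_upwards [hconv.eventually_lt_const hη, self_mem_nhdsWithin] with lam hlt hl s
  have hmem : MemLp (fun x => p₀ x - p lam x) 2 volume := h0.sub (hpmem lam hl)
  have hdiff : (∫ x : 𝕋, ψ ((s : 𝕋) - x) * p₀ x) - ∫ x : 𝕋, ψ ((s : 𝕋) - x) * p lam x
      = PhiStar ψ (fun x => p₀ x - p lam x) ((s : 𝕋)) := by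
    rw [PhiStar, integral_mul_sub' (integrable_kernel_mul hψ h0 _)
      (integrable_kernel_mul hψ (hpmem lam hl) _)]
  have hb := hK (fun x => p₀ x - p lam x) hmem ((s : 𝕋))
  have hsqeq : (∫ x, (p₀ x - p lam x) ^ 2) = ∫ x, (p lam x - p₀ x) ^ 2 := by
    have : (fun x => (p₀ x - p lam x) ^ 2) = fun x => (p lam x - p₀ x) ^ 2 :=
      funext fun x => by ring
    rw [this]
  have hsqrt : Real.sqrt (∫ x, (p₀ x - p lam x) ^ 2) < ε / (K + 1) := by
    rw [hsqeq]
    exact (Real.sqrt_lt' (by positivity)).mpr hlt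
  rw [Real.dist_eq, hdiff]
  calc |PhiStar ψ (fun x => p₀ x - p lam x) ((s : 𝕋))|
      ≤ K * Real.sqrt (∫ x, (p₀ x - p lam x) ^ 2) := hb
    _ ≤ K * (ε / (K + 1)) := mul_le_mul_of_nonneg_left hsqrt.le hK0
    _ < ε := by
        rw [mul_div_assoc']
        rw [div_lt_iff₀ (by positivity)]
        nlinarith

end Stage4

/-- Convergence of dual certificates: as `λ → 0⁺`, the solutions `p_λ` of `D_λ(y)` converge
strongly in `L²(𝕋)` to the minimal-norm solution `p₀` of `D₀(y)`, and the certificates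
`η_λ = Φ*p_λ` together with their first and second derivatives converge uniformly to
`η₀ = Φ*p₀` and its derivatives. -/
theorem dual_certificate_convergence (φ : 𝕋 → ℝ) (hφ : ContDiff ℝ 2 (lift φ))
    (y : 𝕋 → ℝ) (hy : MemLp y 2 volume)
    (p : ℝ → 𝕋 → ℝ) (hp : ∀ lam : ℝ, 0 < lam → SolvesDual φ lam y (p lam))
    (p₀ : 𝕋 → ℝ) (hp₀ : MinNormSol φ y p₀) :
    Filter.Tendsto (fun lam => ∫ t, (p lam t - p₀ t) ^ 2)
        (nhdsWithin 0 (Set.Ioi 0)) (nhds 0) ∧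
      ∀ k : ℕ, k ≤ 2 →
        TendstoUniformly (fun lam => iteratedDeriv k (lift (PhiStar φ (p lam))))
          (iteratedDeriv k (lift (PhiStar φ p₀))) (nhdsWithin 0 (Set.Ioi 0)) := by
  have hφc : Continuous φ := continuous_of_lift hφ.continuous
  have hl2 := l2_convergence hφc hy hp hp₀
  refine ⟨hl2, ?_⟩
  -- smoothness structure
  have hper : Function.Periodic (lift φ) 1 := periodic_lift φ
  obtain ⟨hgdiff, -, hg1⟩ := contDiff_succ_iff_deriv.mp
    (hφ.of_le (le_of_eq (by norm_num) : (1 + 1 : WithTop ℕ∞) ≤ 2))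
  obtain ⟨hgdiff1, -, hg2⟩ := contDiff_succ_iff_deriv.mp
    (hg1.of_le (le_of_eq (by norm_num) : (0 + 1 : WithTop ℕ∞) ≤ 1))
  have hg2c : Continuous (deriv (deriv (lift φ))) := contDiff_zero.mp hg2
  have hper1 : Function.Periodic (deriv (lift φ)) 1 := periodic_deriv' hper
  have hper2 : Function.Periodic (deriv (deriv (lift φ))) 1 := periodic_deriv' hper1
  set φ1 : 𝕋 → ℝ := hper1.lift with hφ1
  set φ2 : 𝕋 → ℝ := hper2.lift with hφ2
  have hlift1 : lift φ1 = deriv (lift φ) := funext fun s => hper1.lift_coe s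
  have hlift2 : lift φ2 = deriv (deriv (lift φ)) := funext fun s => hper2.lift_coe s
  have hφ1c : Continuous φ1 := continuous_of_lift (by rw [hlift1]; exact hg1.continuous)
  have hφ2c : Continuous φ2 := continuous_of_lift (by rw [hlift2]; exact hg2c)
  have hder0 : ∀ s : ℝ, HasDerivAt (lift φ) (lift φ1 s) s := by
    intro s
    rw [show lift φ1 s = deriv (lift φ) s from congrFun hlift1 s]
    exact (hgdiff s).hasDerivAt
  have hder1 : ∀ s : ℝ, HasDerivAt (lift φ1) (lift φ2 s) s := by
    intro s
    rw [hlift1, show lift φ2 s = deriv (deriv (lift φ)) s from congrFun hlift2 s]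
    exact (hgdiff1 s).hasDerivAt
  -- derivative formulas
  have D1 : ∀ (q : 𝕋 → ℝ), MemLp q 2 volume →
      deriv (lift (PhiStar φ q)) = fun s : ℝ => ∫ x : 𝕋, φ1 ((s : 𝕋) - x) * q x := by
    intro q hq
    funext s
    exact (hasDerivAt_conv hφc hφ1c hder0 hq s).deriv
  have D2 : ∀ (q : 𝕋 → ℝ), MemLp q 2 volume →
      deriv (fun s : ℝ => ∫ x : 𝕋, φ1 ((s : 𝕋) - x) * q x)
        = fun s : ℝ => ∫ x : 𝕋, φ2 ((s : 𝕋) - x) * q x := by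
    intro q hq
    funext s
    exact (hasDerivAt_conv hφ1c hφ2c hder1 hq s).deriv
  have hpmem : ∀ l : ℝ, 0 < l → MemLp (p l) 2 volume := fun l hl => (hp l hl).1.1
  intro k hk
  interval_cases k
  · -- k = 0
    simp only [iteratedDeriv_zero]
    exact unif_conv_of_sq hφc hpmem hp₀.1.1 hl2
  · -- k = 1
    simp only [iteratedDeriv_one]
    have U := unif_conv_of_sq hφ1c hpmem hp₀.1.1 hl2
    rw [D1 p₀ hp₀.1.1, ← tendstoUniformlyOn_univ]
    rw [← tendstoUniformlyOn_univ] at U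
    refine U.congr ?_
    filter_upwards [self_mem_nhdsWithin] with lam hl
    intro s _
    rw [D1 (p lam) (hpmem lam hl)]
  · -- k = 2
    have h2eq : ∀ f : ℝ → ℝ, iteratedDeriv 2 f = deriv (deriv f) := by
      intro f
      rw [show (2 : ℕ) = 1 + 1 from rfl, iteratedDeriv_succ, iteratedDeriv_one]
    rw [h2eq, D1 p₀ hp₀.1.1, D2 p₀ hp₀.1.1]
    have U := unif_conv_of_sq hφ2c hpmem hp₀.1.1 hl2
    rw [← tendstoUniformlyOn_univ] at U ⊢
    refine U.congr ?_
    filter_upwards [self_mem_nhdsWithin] with lam hl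
    intro s _
    rw [h2eq, D1 (p lam) (hpmem lam hl), D2 (p lam) (hpmem lam hl)]
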